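/- Let (T,d,ρ,u) be a plane ℝ-tree and let p be a Borel probability measure on T. Then for every α ∈ T×[0,1], p_↶(α) + p_→(α) + p_↷(α) = 1. -/

import Mathlib

open Set MeasureTheory Filter Metric

/-- The metric segment `[[x,y]]` between `x` and `y`. -/
def geoSeg {T : Type*} [MetricSpace T] (x y : T) : Set T :=
  {z | dist x z + dist z y = dist x y}

/-- `(T,d)` is an `ℝ`-tree: it is geodesic (any two points are joined by a geodesic
segment, which is `geoSeg x y`) and loopless (this segment is the unique arc joining
`x` and `y`). -/
structure IsRTree (T : Type*) [MetricSpace T] : Prop where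
  geodesic : ∀ x y : T, ∃ γ : ℝ → T, γ 0 = x ∧ γ (dist x y) = y ∧
    (∀ s ∈ Icc (0:ℝ) (dist x y), ∀ t ∈ Icc (0:ℝ) (dist x y),
      dist (γ s) (γ t) = |s - t|) ∧
    γ '' Icc (0:ℝ) (dist x y) = geoSeg x y
  loopless : ∀ x y : T, ∀ f : ℝ → T, ContinuousOn f (Icc (0:ℝ) 1) →
    InjOn f (Icc (0:ℝ) 1) → f 0 = x → f 1 = y → f '' Icc (0:ℝ) 1 = geoSeg x y

/-- The set of connected components of `T \ {x}`. -/
def comps {T : Type*} [MetricSpace T] (x : T) : Set (Set T) :=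
  {C | ∃ y, y ≠ x ∧ C = connectedComponentIn ({x}ᶜ) y}

/-- A plane `ℝ`-tree structure on the metric space `T`: `T` is a separable complete
`ℝ`-tree with a root and a balanced angle function `u`.  `cca x y` is the closest
common ancestor of `x` and `y`. -/
structure PlaneRTree (T : Type*) [MetricSpace T] where
  sep : TopologicalSpace.SeparableSpace T
  cpl : CompleteSpace T
  tree : IsRTree T
  root : T
  cca : T → T → T
  cca_mem : ∀ x y : T, cca x y ∈ geoSeg root x ∩ geoSeg root y
  cca_max : ∀ x y : T, ∀ z ∈ geoSeg root x ∩ geoSeg root y,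
    dist root z ≤ dist root (cca x y)
  u : T → T → ℝ
  u_mem : ∀ x y : T, u x y ∈ Icc (0:ℝ) 1
  u_root : ∀ x : T, u x root = 0
  u_self : ∀ x : T, u x x = 0
  u_eq_iff : ∀ x y z : T, y ≠ x → z ≠ x →
    (u x y = u x z ↔ connectedComponentIn ({x}ᶜ) y = connectedComponentIn ({x}ᶜ) z)
  balanced : ∀ x y : T, (comps x).ncard = 2 → u x y = 0 ∨ u x y = 1/2

namespace PlaneRTree

variable {T : Type*} [MetricSpace T]

open Classical in
/-- The angle `u(x, (y,w))`: it is `u x y` if `x ≠ y`, and `w` if `x = y`. -/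
noncomputable def ang (P : PlaneRTree T) (x : T) (β : T × ℝ) : ℝ :=
  if x = β.1 then β.2 else P.u x β.1

/-- `α ↷ β` : `α` is at the left of `β`. -/
def leftOf (P : PlaneRTree T) (α β : T × ℝ) : Prop :=
  P.ang (P.cca α.1 β.1) α < P.ang (P.cca α.1 β.1) β

/-- `α → β` : `β` is in front of `α`. -/
def frontOf (P : PlaneRTree T) (α β : T × ℝ) : Prop :=
  α.1 ∈ geoSeg P.root β.1 ∧ P.ang α.1 β = α.2

/-- The contour relation `≺` : `α ≺ β` iff `α ↷ β` or `α → β`. -/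
def precOf (P : PlaneRTree T) (α β : T × ℝ) : Prop :=
  P.leftOf α β ∨ P.frontOf α β

end PlaneRTree

namespace PlaneRTree

variable {T : Type*} [MetricSpace T] [MeasurableSpace T] [BorelSpace T]

/-- The measure `p_L`, product of `p` with Lebesgue measure on `[0,1]`. -/
noncomputable def pL (p : Measure T) : Measure (T × ℝ) :=
  p.prod (volume.restrict (Icc (0:ℝ) 1))

/-- `p_↶(α) = p_L {β : β ↷ α}`, the mass at the left of `α`. -/
noncomputable def pleft (P : PlaneRTree T) (p : Measure T) (α : T × ℝ) : ℝ :=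
  (pL p {β : T × ℝ | P.leftOf β α}).toReal

/-- `p_→(α) = p_L {β : α → β}`, the mass in front of `α`. -/
noncomputable def pfront (P : PlaneRTree T) (p : Measure T) (α : T × ℝ) : ℝ :=
  (pL p {β : T × ℝ | P.frontOf α β}).toReal

/-- `p_↷(α) = p_L {β : α ↷ β}`, the mass at the right of `α`. -/
noncomputable def pright (P : PlaneRTree T) (p : Measure T) (α : T × ℝ) : ℝ :=
  (pL p {β : T × ℝ | P.leftOf α β}).toReal

end PlaneRTree


namespace RTreeAux

variable {T : Type*} [MetricSpace T] {a b c z z' m y : T}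

lemma mem_geoSeg_iff : z ∈ geoSeg a b ↔ dist a z + dist z b = dist a b := Iff.rfl

lemma geoSeg_comm (a b : T) : geoSeg a b = geoSeg b a := by
  ext z; simp only [mem_geoSeg_iff, dist_comm a z, dist_comm z b, dist_comm a b]
  constructor <;> intro h <;> linarith

lemma left_mem_geoSeg (a b : T) : a ∈ geoSeg a b := by simp [mem_geoSeg_iff]

lemma right_mem_geoSeg (a b : T) : b ∈ geoSeg a b := by simp [mem_geoSeg_iff]

lemma geoSeg_self (a : T) : geoSeg a a = {a} := by
  ext z; simp only [mem_geoSeg_iff, dist_self, mem_singleton_iff]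
  constructor
  · intro h
    have h1 : dist a z = 0 := by
      have h2 := dist_nonneg (x := a) (y := z); have h3 := dist_nonneg (x := z) (y := a)
      linarith
    exact (dist_eq_zero.mp h1).symm
  · rintro rfl; simp

lemma isClosed_geoSeg (a b : T) : IsClosed (geoSeg a b) :=
  isClosed_eq ((continuous_const.dist continuous_id).add (continuous_id.dist continuous_const)) continuous_const

/-- membership in geoSeg a z for z on geoSeg a b (pure metric) -/
lemma geoSeg_subset_left (hz : z ∈ geoSeg a b) : geoSeg a z ⊆ geoSeg a b := by
  intro w hw
  rw [mem_geoSeg_iff] at *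
  have h1 : dist a b ≤ dist a w + dist w b := dist_triangle a w b
  have h2 : dist w b ≤ dist w z + dist z b := dist_triangle w z b
  have h3 : dist a w + dist w b ≤ dist a b := by
    calc dist a w + dist w b ≤ dist a w + (dist w z + dist z b) := by linarith
    _ = dist a b := by linarith
  linarith

lemma geoSeg_subset_right (hz : z ∈ geoSeg a b) : geoSeg z b ⊆ geoSeg a b := by
  rw [geoSeg_comm z b, geoSeg_comm a b]
  exact geoSeg_subset_left (by rwa [geoSeg_comm b a])

noncomputable def clamp (l s : ℝ) : ℝ := max 0 (min l s)

lemma clamp_mem (l : ℝ) (hl : 0 ≤ l) (s : ℝ) : clamp l s ∈ Icc 0 l := by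
  unfold clamp
  constructor
  · exact le_max_left _ _
  · rcases le_total l s with h | h <;> simp [min_eq_left, min_eq_right, h, hl]

lemma clamp_of_mem {l s : ℝ} (hs : s ∈ Icc 0 l) : clamp l s = s := by
  unfold clamp
  rw [min_eq_right hs.2, max_eq_right hs.1]

lemma clamp_lipschitz (l : ℝ) (s t : ℝ) : |clamp l s - clamp l t| ≤ |s - t| := by
  unfold clamp
  calc |max 0 (min l s) - max 0 (min l t)| ≤ |min l s - min l t| := by
        rw [max_comm 0 (min l s), max_comm 0 (min l t)]
        exact abs_max_sub_max_le_abs _ _ _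
    _ ≤ |s - t| := by
        rcases le_total s t with h | h
        · rw [abs_of_nonpos (by simp only [sub_nonpos]; exact min_le_min le_rfl h),
            abs_of_nonpos (by linarith)]
          simp only [neg_sub]
          rcases le_total l s with h1 | h1 <;> rcases le_total l t with h2 | h2 <;>
            simp [min_eq_left, min_eq_right, h1, h2] <;> linarith
        · rw [abs_of_nonneg (by simp only [sub_nonneg]; exact min_le_min le_rfl h),
            abs_of_nonneg (by linarith)]
          rcases le_total l s with h1 | h1 <;> rcases le_total l t with h2 | h2 <;>
            simp [min_eq_left, min_eq_right, h1, h2] <;> linarith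

variable (hT : IsRTree T)
include hT

lemma eq_of_mem_geoSeg_of_dist_eq (hz : z ∈ geoSeg a b) (hz' : z' ∈ geoSeg a b)
    (h : dist a z = dist a z') : z = z' := by
  obtain ⟨γ, h0, hp, hiso, him⟩ := hT.geodesic a b
  rw [← him] at hz hz'
  obtain ⟨s, hs, rfl⟩ := hz
  obtain ⟨s', hs', rfl⟩ := hz'
  have h1 : dist a (γ s) = s := by
    rw [← h0, hiso 0 ⟨le_refl 0, dist_nonneg⟩ s hs, abs_of_nonpos (by linarith [hs.1])]
    ring
  have h2 : dist a (γ s') = s' := by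
    rw [← h0, hiso 0 ⟨le_refl 0, dist_nonneg⟩ s' hs', abs_of_nonpos (by linarith [hs'.1])]
    ring
  rw [h1, h2] at h; rw [h]

lemma mem_geoSeg_of_dist_le (hz : z ∈ geoSeg a b) (hz' : z' ∈ geoSeg a b)
    (h : dist a z ≤ dist a z') : z ∈ geoSeg a z' := by
  obtain ⟨γ, h0, hp, hiso, him⟩ := hT.geodesic a b
  rw [← him] at hz hz'
  obtain ⟨s, hs, rfl⟩ := hz
  obtain ⟨s', hs', rfl⟩ := hz'
  have h1 : dist a (γ s) = s := by
    rw [← h0, hiso 0 ⟨le_refl 0, dist_nonneg⟩ s hs, abs_of_nonpos (by linarith [hs.1])]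
    ring
  have h2 : dist a (γ s') = s' := by
    rw [← h0, hiso 0 ⟨le_refl 0, dist_nonneg⟩ s' hs', abs_of_nonpos (by linarith [hs'.1])]
    ring
  rw [mem_geoSeg_iff, h1, hiso s hs s' hs', h2, abs_of_nonpos (by rw [h1, h2] at h; linarith)]
  ring

lemma geoSeg_split (hm : m ∈ geoSeg a b) : geoSeg a b = geoSeg a m ∪ geoSeg m b := by
  apply Subset.antisymm
  · intro z hz
    rcases le_total (dist a z) (dist a m) with h | h
    · exact Or.inl (mem_geoSeg_of_dist_le hT hz hm h)
    · right
      have hz' : z ∈ geoSeg b a := by rwa [geoSeg_comm]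
      have hm' : m ∈ geoSeg b a := by rwa [geoSeg_comm]
      have hd : dist b z ≤ dist b m := by
        rw [mem_geoSeg_iff] at hz hm
        have := dist_comm z b; have := dist_comm m b
        linarith
      rw [geoSeg_comm]
      exact mem_geoSeg_of_dist_le hT hz' hm' hd
  · exact union_subset (geoSeg_subset_left hm) (geoSeg_subset_right hm)

lemma median (a b c : T) :
    ∃ m, m ∈ geoSeg a b ∧ m ∈ geoSeg b c ∧ m ∈ geoSeg a c := by
  obtain ⟨γ1, hγ10, hγ1p, hiso1, him1⟩ := hT.geodesic a b
  obtain ⟨γ2, hγ20, hγ2q, hiso2, him2⟩ := hT.geodesic b c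
  set p := dist a b with hp
  set q := dist b c with hq
  have hp0 : 0 ≤ p := dist_nonneg
  have hq0 : 0 ≤ q := dist_nonneg
  -- continuity on Icc
  have hcont1 : ContinuousOn γ1 (Icc 0 p) := by
    refine LipschitzOnWith.continuousOn (K := 1) ?_
    rw [lipschitzOnWith_iff_dist_le_mul]
    intro s hs t ht
    rw [hiso1 s hs t ht, Real.dist_eq]
    simp
  set K := {s | s ∈ Icc 0 p ∧ γ1 s ∈ geoSeg b c} with hK
  have hpK : p ∈ K := ⟨⟨hp0, le_refl _⟩, by rw [hγ1p]; exact left_mem_geoSeg b c⟩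
  have hKc : IsClosed K := by
    have : K = (Icc 0 p) ∩ (Icc 0 p ∩ γ1 ⁻¹' geoSeg b c) := by
      ext s; simp only [hK, mem_setOf_eq, mem_inter_iff, mem_preimage]; tauto
    rw [this]
    exact isClosed_Icc.inter (hcont1.preimage_isClosed_of_isClosed isClosed_Icc
      (isClosed_geoSeg b c))
  have hKne : K.Nonempty := ⟨p, hpK⟩
  have hKbdd : BddBelow K := ⟨0, fun s hs => hs.1.1⟩
  set s0 := sInf K with hs0
  have hs0K : s0 ∈ K := hKc.csInf_mem hKne hKbdd
  set m := γ1 s0 with hm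
  have hmab : m ∈ geoSeg a b := by rw [← him1]; exact ⟨s0, hs0K.1, rfl⟩
  have hmbc : m ∈ geoSeg b c := hs0K.2
  refine ⟨m, hmab, hmbc, ?_⟩
  -- s0 = 0 case : m = a
  rcases eq_or_lt_of_le hs0K.1.1 with h00 | hs0pos
  · have : m = a := by rw [hm, ← h00, hγ10]
    rw [this]; exact left_mem_geoSeg a c
  -- t0
  have hm2 : m ∈ γ2 '' Icc 0 q := by rw [him2]; exact hmbc
  obtain ⟨t0, ht0, hγ2t0⟩ := hm2
  rcases eq_or_lt_of_le ht0.2 with hqq | ht0q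
  · have : m = c := by rw [← hγ2t0, hqq, hγ2q]
    rw [this]; exact right_mem_geoSeg a c
  -- main case: build the concatenated arc
  classical
  set f : ℝ → T := fun r => if r ≤ 1/2 then γ1 (clamp p (2 * r * s0))
    else γ2 (clamp q (t0 + (2*r - 1) * (q - t0))) with hf
  have hs0p : s0 ≤ p := hs0K.1.2
  have harg1 : ∀ r : ℝ, r ∈ Icc (0:ℝ) (1/2) → 2 * r * s0 ∈ Icc 0 p :=
    fun r hr => ⟨by nlinarith [hr.1, le_of_lt hs0pos], by nlinarith [hr.2, le_of_lt hs0pos, hs0p]⟩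
  have harg2 : ∀ r : ℝ, r ∈ Icc (1/2:ℝ) 1 → t0 + (2*r - 1) * (q - t0) ∈ Icc 0 q := by
    intro r hr
    constructor
    · nlinarith [ht0.1, hr.1, le_of_lt ht0q]
    · nlinarith [hr.2, le_of_lt ht0q]
  -- continuity
  have hc1 : Continuous fun r : ℝ => γ1 (clamp p (2 * r * s0)) := by
    have hL : LipschitzWith 1 (fun s => γ1 (clamp p s)) := by
      rw [lipschitzWith_iff_dist_le_mul]
      intro s t
      rw [hiso1 _ (clamp_mem p hp0 s) _ (clamp_mem p hp0 t)]
      simpa [Real.dist_eq] using clamp_lipschitz p s t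
    exact hL.continuous.comp (by fun_prop)
  have hc2 : Continuous fun r : ℝ => γ2 (clamp q (t0 + (2*r - 1) * (q - t0))) := by
    have hL : LipschitzWith 1 (fun s => γ2 (clamp q s)) := by
      rw [lipschitzWith_iff_dist_le_mul]
      intro s t
      rw [hiso2 _ (clamp_mem q hq0 s) _ (clamp_mem q hq0 t)]
      simpa [Real.dist_eq] using clamp_lipschitz q s t
    exact hL.continuous.comp (by fun_prop)
  have hmid : ∀ r : ℝ, r = 1/2 →
      γ1 (clamp p (2 * r * s0)) = γ2 (clamp q (t0 + (2*r - 1) * (q - t0))) := by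
    rintro r rfl
    have e1 : 2 * (1/2 : ℝ) * s0 = s0 := by ring
    have e2 : t0 + (2*(1/2:ℝ) - 1) * (q - t0) = t0 := by ring
    rw [e1, e2, clamp_of_mem ⟨le_of_lt hs0pos, hs0p⟩, clamp_of_mem ht0, hγ2t0]
  have hfc : Continuous f := by
    exact Continuous.if_le hc1 hc2 continuous_id continuous_const hmid
  have hf0 : f 0 = a := by
    simp only [hf]
    rw [if_pos (by norm_num)]
    have : 2 * (0:ℝ) * s0 = 0 := by ring
    rw [this, clamp_of_mem ⟨le_refl 0, hp0⟩, hγ10]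
  have hf1 : f 1 = c := by
    simp only [hf]
    rw [if_neg (by norm_num)]
    have : t0 + (2*(1:ℝ) - 1) * (q - t0) = q := by ring
    rw [this, clamp_of_mem ⟨hq0, le_refl q⟩, hγ2q]
  -- values
  have hval1 : ∀ r : ℝ, r ∈ Icc (0:ℝ) (1/2) → f r = γ1 (2 * r * s0) := by
    intro r hr
    simp only [hf]
    rw [if_pos hr.2, clamp_of_mem (harg1 r hr)]
  have hval2 : ∀ r : ℝ, r ∈ Icc (1/2:ℝ) 1 → ¬ (r ≤ 1/2) →
      f r = γ2 (t0 + (2*r - 1) * (q - t0)) := by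
    intro r hr hr2
    simp only [hf]
    rw [if_neg hr2, clamp_of_mem (harg2 r hr)]
  -- key: γ1 s ∉ geoSeg b c for s < s0, i.e. if γ1 s = γ2 t then s0 ≤ s
  have hkey : ∀ s ∈ Icc 0 p, γ1 s ∈ geoSeg b c → s0 ≤ s := by
    intro s hs hmem
    exact csInf_le hKbdd ⟨hs, hmem⟩
  -- injectivity
  have hinj : InjOn f (Icc 0 1) := by
    have main : ∀ r1 ∈ Icc (0:ℝ) 1, ∀ r2 ∈ Icc (0:ℝ) 1, r1 ≤ r2 → f r1 = f r2 → r1 = r2 := by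
      intro r1 hr1 r2 hr2 hle heq
      by_cases h1 : r1 ≤ 1/2 <;> by_cases h2 : r2 ≤ 1/2
      · -- both in first branch
        rw [hval1 r1 ⟨hr1.1, h1⟩, hval1 r2 ⟨hr2.1, h2⟩] at heq
        have := hiso1 _ (harg1 r1 ⟨hr1.1, h1⟩) _ (harg1 r2 ⟨hr2.1, h2⟩)
        rw [heq, dist_self] at this
        have h0 : |2 * r1 * s0 - 2 * r2 * s0| = 0 := this.symm
        rw [abs_eq_zero] at h0
        have : (r1 - r2) * (2 * s0) = 0 := by linarith [h0]
        rcases mul_eq_zero.mp this with h | h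
        · linarith
        · linarith
      · -- r1 first, r2 second
        exfalso
        have hr2' : (1/2:ℝ) ≤ r2 := le_of_not_ge h2
        rw [hval1 r1 ⟨hr1.1, h1⟩, hval2 r2 ⟨hr2', hr2.2⟩ h2] at heq
        -- γ1 (2 r1 s0) ∈ geoSeg b c
        have hmem : γ1 (2 * r1 * s0) ∈ geoSeg b c := by
          rw [heq, ← him2]
          exact ⟨_, harg2 r2 ⟨hr2', hr2.2⟩, rfl⟩
        have hge : s0 ≤ 2 * r1 * s0 := hkey _ (harg1 r1 ⟨hr1.1, h1⟩) hmem
        have hle' : 2 * r1 * s0 ≤ s0 := by nlinarith [hs0pos]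
        have heqs : 2 * r1 * s0 = s0 := le_antisymm hle' hge
        -- so f r1 = m ; then γ2 arg = m gives arg = t0
        rw [heqs] at heq
        have : γ2 t0 = γ2 (t0 + (2*r2 - 1) * (q - t0)) := by rw [hγ2t0, hm]; exact heq
        have hdd := hiso2 _ ht0 _ (harg2 r2 ⟨hr2', hr2.2⟩)
        rw [← this, dist_self] at hdd
        have h0 : |t0 - (t0 + (2*r2 - 1) * (q - t0))| = 0 := hdd.symm
        rw [abs_eq_zero] at h0
        have : (2*r2 - 1) * (q - t0) = 0 := by linarith
        rcases mul_eq_zero.mp this with h | h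
        · -- r2 = 1/2 contradicts ¬ r2 ≤ 1/2
          have : r2 = 1/2 := by linarith
          exact h2 (by linarith)
        · linarith [ht0q]
      · linarith
      · -- both second
        have hr1' : (1/2:ℝ) ≤ r1 := le_of_not_ge h1
        have hr2' : (1/2:ℝ) ≤ r2 := le_of_not_ge h2
        rw [hval2 r1 ⟨hr1', hr1.2⟩ h1, hval2 r2 ⟨hr2', hr2.2⟩ h2] at heq
        have := hiso2 _ (harg2 r1 ⟨hr1', hr1.2⟩) _ (harg2 r2 ⟨hr2', hr2.2⟩)
        rw [heq, dist_self] at this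
        have h0 : |t0 + (2*r1 - 1) * (q - t0) - (t0 + (2*r2 - 1) * (q - t0))| = 0 := this.symm
        rw [abs_eq_zero] at h0
        have : (r1 - r2) * (2 * (q - t0)) = 0 := by linarith [h0]
        rcases mul_eq_zero.mp this with h | h
        · linarith
        · linarith [ht0q]
    intro r1 hr1 r2 hr2 heq
    rcases le_total r1 r2 with h | h
    · exact main r1 hr1 r2 hr2 h heq
    · exact (main r2 hr2 r1 hr1 h heq.symm).symm
  have him := hT.loopless a c f hfc.continuousOn hinj hf0 hf1
  have : m ∈ f '' Icc 0 1 := by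
    refine ⟨1/2, by norm_num, ?_⟩
    rw [hval1 (1/2) ⟨by norm_num, le_refl _⟩]
    have : 2 * (1/2:ℝ) * s0 = s0 := by ring
    rw [this]
  rw [him] at this
  exact this

lemma mem_geoSeg_of_dist_le' (hz : z ∈ geoSeg a b) (hz' : z' ∈ geoSeg a b)
    (h : dist a z ≤ dist a z') : z' ∈ geoSeg z b := by
  obtain ⟨γ, h0, hp, hiso, him⟩ := hT.geodesic a b
  rw [← him] at hz hz'
  obtain ⟨s, hs, rfl⟩ := hz
  obtain ⟨s', hs', rfl⟩ := hz'
  have h1 : dist a (γ s) = s := by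
    rw [← h0, hiso 0 ⟨le_refl 0, dist_nonneg⟩ s hs, abs_of_nonpos (by linarith [hs.1])]
    ring
  have h2 : dist a (γ s') = s' := by
    rw [← h0, hiso 0 ⟨le_refl 0, dist_nonneg⟩ s' hs', abs_of_nonpos (by linarith [hs'.1])]
    ring
  have hss' : s ≤ s' := by rw [h1, h2] at h; exact h
  have hd1 : dist (γ s) (γ s') = s' - s := by
    rw [hiso s hs s' hs', abs_of_nonpos (by linarith)]; ring
  have hd2 : dist (γ s) b = dist a b - s := by
    have h' := hiso s hs (dist a b) ⟨dist_nonneg, le_refl _⟩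
    rw [hp, abs_of_nonpos (by linarith [hs.2])] at h'
    linarith
  have hd3 : dist (γ s') b = dist a b - s' := by
    have h' := hiso s' hs' (dist a b) ⟨dist_nonneg, le_refl _⟩
    rw [hp, abs_of_nonpos (by linarith [hs'.2])] at h'
    linarith
  rw [mem_geoSeg_iff, hd1, hd3, hd2]
  ring

lemma geoSeg_subset_union (a b c : T) : geoSeg a c ⊆ geoSeg a b ∪ geoSeg b c := by
  obtain ⟨m, hab, hbc, hac⟩ := median hT a b c
  rw [geoSeg_split hT hac]
  exact union_subset_union (geoSeg_subset_left hab) (geoSeg_subset_right hbc)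

lemma joinedIn_geoSeg {U : Set T} (hsub : geoSeg y z ⊆ U) : JoinedIn U y z := by
  obtain ⟨γ, h0, hl, hiso, him⟩ := hT.geodesic y z
  set l := dist y z with hldef
  have hl0 : 0 ≤ l := dist_nonneg
  have hLip : LipschitzWith 1 (fun s => γ (clamp l s)) := by
    rw [lipschitzWith_iff_dist_le_mul]
    intro s t
    rw [hiso _ (clamp_mem l hl0 s) _ (clamp_mem l hl0 t)]
    simpa [Real.dist_eq] using clamp_lipschitz l s t
  have hcont : Continuous fun t : unitInterval => γ (clamp l ((t : ℝ) * l)) :=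
    hLip.continuous.comp (continuous_subtype_val.mul continuous_const)
  refine ⟨⟨⟨fun t => γ (clamp l ((t : ℝ) * l)), hcont⟩, ?_, ?_⟩, ?_⟩
  · show γ (clamp l ((0 : ℝ) * l)) = y
    rw [zero_mul, clamp_of_mem ⟨le_refl 0, hl0⟩, h0]
  · show γ (clamp l ((1 : ℝ) * l)) = z
    rw [one_mul, clamp_of_mem ⟨hl0, le_refl l⟩, hl]
  · intro t
    apply hsub
    rw [← him]
    exact ⟨_, clamp_mem l hl0 _, rfl⟩

lemma connectedComponentIn_compl (hm : y ≠ m) :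
    connectedComponentIn ({m}ᶜ) y = {z | m ∉ geoSeg y z} := by
  set U := {z | m ∉ geoSeg y z} with hU
  have hyU : y ∈ U := by
    simp only [hU, mem_setOf_eq, geoSeg_self]
    exact fun h => hm (mem_singleton_iff.mp h).symm
  have hUm : U ⊆ ({m}ᶜ : Set T) := by
    intro z hz
    simp only [mem_compl_iff, mem_singleton_iff]
    rintro rfl
    exact hz (right_mem_geoSeg y z)
  apply Subset.antisymm
  · -- component ⊆ U
    set V := {z | z ≠ m ∧ m ∈ geoSeg y z} with hV
    have hUopen : IsOpen U := by
      have : U = {z | dist y m + dist m z = dist y z}ᶜ := rfl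
      rw [this]
      exact (isClosed_eq ((continuous_const).add (continuous_const.dist continuous_id))
        (continuous_const.dist continuous_id)).isOpen_compl
    have hVopen : IsOpen V := by
      rw [Metric.isOpen_iff]
      rintro z ⟨hzm, hmz⟩
      refine ⟨dist z m, dist_pos.mpr hzm, ?_⟩
      intro z' hz'
      rw [Metric.mem_ball] at hz'
      have hz'm : z' ≠ m := by
        intro h; rw [h, dist_comm] at hz'; exact lt_irrefl _ hz'
      refine ⟨hz'm, ?_⟩
      have := geoSeg_subset_union hT y z' z hmz
      rcases this with h | h
      · exact h
      · exfalso
        rw [mem_geoSeg_iff] at h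
        have hnn : (0:ℝ) ≤ dist z' m := dist_nonneg
        have hcc : dist m z = dist z m := dist_comm m z
        linarith
    have hsub : connectedComponentIn ({m}ᶜ) y ⊆ U ∪ V := by
      intro z hz
      have hzc := connectedComponentIn_subset ({m}ᶜ : Set T) y hz
      simp only [mem_compl_iff, mem_singleton_iff] at hzc
      by_cases h : m ∈ geoSeg y z
      · exact Or.inr ⟨hzc, h⟩
      · exact Or.inl h
    have hdisj : Disjoint U V := by
      rw [Set.disjoint_left]
      rintro z hzU ⟨_, hzV⟩
      exact hzU hzV
    have hne : (connectedComponentIn ({m}ᶜ) y ∩ U).Nonempty :=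
      ⟨y, mem_connectedComponentIn (by simpa using hm), hyU⟩
    exact (isPreconnected_connectedComponentIn).subset_left_of_subset_union
      hUopen hVopen hdisj hsub hne
  · -- U ⊆ component
    have hpath : IsPathConnected U := by
      refine ⟨y, hyU, ?_⟩
      intro z hz
      apply joinedIn_geoSeg hT
      intro w hw
      simp only [hU, mem_setOf_eq]
      intro hmem
      exact hz (geoSeg_subset_left hw hmem)
    exact hpath.isConnected.isPreconnected.subset_connectedComponentIn hyU hUm

end RTreeAux

namespace PlaneRTree
open RTreeAux

variable {T : Type*} [MetricSpace T] (P : PlaneRTree T) {x y z m : T}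

lemma cca_unique (h1 : z ∈ geoSeg P.root x) (h2 : z ∈ geoSeg P.root y)
    (h3 : z ∈ geoSeg x y) : P.cca x y = z := by
  have hT := P.tree
  set m' := P.cca x y with hm'
  obtain ⟨hm1, hm2⟩ := P.cca_mem x y
  have hle : dist P.root z ≤ dist P.root m' := P.cca_max x y z ⟨h1, h2⟩
  have h4 : m' ∈ geoSeg z x := mem_geoSeg_of_dist_le' hT h1 hm1 hle
  have h5 : m' ∈ geoSeg z y := mem_geoSeg_of_dist_le' hT h2 hm2 hle
  rw [mem_geoSeg_iff] at h3 h4 h5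
  have htri : dist x y ≤ dist x m' + dist m' y := dist_triangle x m' y
  have e1 : dist x z = dist z x := dist_comm x z
  have e3 : dist m' x = dist x m' := dist_comm m' x
  have hnn : (0:ℝ) ≤ dist z m' := dist_nonneg
  have hz : dist z m' = 0 := by linarith
  exact (dist_eq_zero.mp hz).symm

lemma cca_spec : P.cca x y ∈ geoSeg P.root x ∧ P.cca x y ∈ geoSeg P.root y ∧
    P.cca x y ∈ geoSeg x y := by
  obtain ⟨m, h1, h2, h3⟩ := median P.tree x P.root y
  have h1' : m ∈ geoSeg P.root x := by rwa [geoSeg_comm]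
  have heq := P.cca_unique h1' h2 h3
  rw [heq]; exact ⟨h1', h2, h3⟩

lemma cca_comm : P.cca y x = P.cca x y := by
  obtain ⟨h1, h2, h3⟩ := P.cca_spec (x := x) (y := y)
  exact P.cca_unique h2 h1 (by rwa [geoSeg_comm])

lemma cca_eq_left (h : x ∈ geoSeg P.root y) : P.cca x y = x :=
  P.cca_unique (right_mem_geoSeg _ _) h (left_mem_geoSeg x y)

lemma cca_eq_right (h : y ∈ geoSeg P.root x) : P.cca x y = y :=
  P.cca_unique h (right_mem_geoSeg _ _) (right_mem_geoSeg x y)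

lemma cca_transport (h : P.cca x y ∉ geoSeg y z) : P.cca x z = P.cca x y := by
  obtain ⟨h1, h2, h3⟩ := P.cca_spec (x := x) (y := y)
  have hz1 : P.cca x y ∈ geoSeg P.root z := by
    rcases geoSeg_subset_union P.tree P.root z y h2 with h' | h'
    · exact h'
    · exact absurd (by rwa [geoSeg_comm] at h') h
  have hz2 : P.cca x y ∈ geoSeg x z := by
    rcases geoSeg_subset_union P.tree x z y h3 with h' | h'
    · exact h'
    · exact absurd (by rwa [geoSeg_comm] at h') h
  exact P.cca_unique h1 hz1 hz2

lemma u_eq_u_iff (hy : y ≠ m) (hz : z ≠ m) :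
    P.u m y = P.u m z ↔ m ∉ geoSeg y z := by
  rw [P.u_eq_iff m y z hy hz]
  constructor
  · intro hcomp
    have hzz : z ∈ connectedComponentIn ({m}ᶜ : Set T) z :=
      mem_connectedComponentIn (by simpa using hz)
    rw [← hcomp, connectedComponentIn_compl P.tree hy] at hzz
    exact hzz
  · intro h
    have hz' : z ∈ connectedComponentIn ({m}ᶜ : Set T) y := by
      rw [connectedComponentIn_compl P.tree hy]; exact h
    exact connectedComponentIn_eq hz'

lemma countable_bad (x : T) :
    {y | y ∈ geoSeg P.root x ∧ y ≠ x ∧ y ≠ P.root ∧ P.u y x ≠ 1/2}.Countable := by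
  classical
  haveI := P.sep
  obtain ⟨Q, hQc, hQd⟩ := TopologicalSpace.exists_countable_dense T
  set ρ := P.root with hρ
  set E := {y | y ∈ geoSeg ρ x ∧ y ≠ x ∧ y ≠ ρ ∧ P.u y x ≠ 1/2} with hE
  have hwit : ∀ y ∈ E, ∃ q ∈ Q, y ∈ geoSeg ρ q ∧ y ∈ geoSeg x q := by
    rintro y ⟨hyspine, hyx, hyρ, hyu⟩
    -- u y x ≠ 0
    have hux0 : P.u y x ≠ 0 := by
      intro h0
      have h1 : P.u y x = P.u y ρ := by rw [h0, P.u_root y]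
      rw [P.u_eq_u_iff (Ne.symm hyx) (Ne.symm hyρ)] at h1
      exact h1 (by rwa [geoSeg_comm] at hyspine)
    -- hence not balanced hence not ncard 2
    have hnc : (comps y).ncard ≠ 2 := by
      intro h2
      rcases P.balanced y x h2 with h | h
      · exact hux0 h
      · exact hyu h
    set Cr := connectedComponentIn ({y}ᶜ : Set T) ρ with hCr
    set Cx := connectedComponentIn ({y}ᶜ : Set T) x with hCx
    have hCrx : Cr ≠ Cx := by
      intro h
      have hx : x ∈ Cx := mem_connectedComponentIn (by simpa using (Ne.symm hyx))
      rw [← h, hCr, connectedComponentIn_compl P.tree (Ne.symm hyρ)] at hx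
      exact hx hyspine
    have hCrm : Cr ∈ comps y := ⟨ρ, Ne.symm hyρ, rfl⟩
    have hCxm : Cx ∈ comps y := ⟨x, Ne.symm hyx, rfl⟩
    -- third component
    have hthird : ∃ C ∈ comps y, C ≠ Cr ∧ C ≠ Cx := by
      by_contra hcon
      push_neg at hcon
      have hsub : comps y ⊆ {Cr, Cx} := by
        intro C hC
        rcases eq_or_ne C Cr with h | h
        · exact Or.inl h
        · rcases eq_or_ne C Cx with h' | h'
          · exact Or.inr h'
          · exact absurd h' (by intro _; exact h' (hcon C hC h))
      have hsub2 : ({Cr, Cx} : Set (Set T)) ⊆ comps y := by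
        rintro C (rfl | rfl)
        · exact hCrm
        · exact hCxm
      have heq : comps y = {Cr, Cx} := Subset.antisymm hsub hsub2
      rw [heq, Set.ncard_pair hCrx] at hnc
      exact hnc rfl
    obtain ⟨C, ⟨zy, hzy, rfl⟩, hCne1, hCne2⟩ := hthird
    -- zy : y ∈ geoSeg ρ zy ∧ y ∈ geoSeg x zy
    have hz1 : y ∈ geoSeg ρ zy := by
      by_contra h
      have : zy ∈ Cr := by
        rw [hCr, connectedComponentIn_compl P.tree (Ne.symm hyρ)]
        exact h
      exact hCne1 (connectedComponentIn_eq this).symm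
    have hz2 : y ∈ geoSeg x zy := by
      by_contra h
      have : zy ∈ Cx := by
        rw [hCx, connectedComponentIn_compl P.tree (Ne.symm hyx)]
        exact h
      exact hCne2 (connectedComponentIn_eq this).symm
    -- dense point in the open component of zy
    have hopen : IsOpen (connectedComponentIn ({y}ᶜ : Set T) zy) := by
      rw [connectedComponentIn_compl P.tree hzy]
      have : {z | y ∉ geoSeg zy z} = {z | dist zy y + dist y z = dist zy z}ᶜ := rfl
      rw [this]
      exact (isClosed_eq ((continuous_const).add (continuous_const.dist continuous_id))
        (continuous_const.dist continuous_id)).isOpen_compl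
    have hne : (connectedComponentIn ({y}ᶜ : Set T) zy).Nonempty :=
      ⟨zy, mem_connectedComponentIn (by simpa using hzy)⟩
    obtain ⟨q, hqQ, hqC⟩ := hQd.exists_mem_open hopen hne
    -- transport
    rw [connectedComponentIn_compl P.tree hzy] at hqC
    have hq1 : y ∈ geoSeg ρ q := by
      rcases geoSeg_subset_union P.tree ρ q zy hz1 with h | h
      · exact h
      · exact absurd (by rwa [geoSeg_comm] at h) hqC
    have hq2 : y ∈ geoSeg x q := by
      rcases geoSeg_subset_union P.tree x q zy hz2 with h | h
      · exact h
      · exact absurd (by rwa [geoSeg_comm] at h) hqC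
    exact ⟨q, hqQ, hq1, hq2⟩
  choose! f hfQ hf1 hf2 using hwit
  have key : ∀ y ∈ E, ∀ y' ∈ E, f y = f y' → dist ρ y < dist ρ y' → False := by
    intro y hy y' hy' hfe hlt
    have h1 : y ∈ geoSeg ρ (f y) := hf1 y hy
    have h2 : y ∈ geoSeg x (f y) := hf2 y hy
    have h1' : y' ∈ geoSeg ρ (f y) := by rw [hfe]; exact hf1 y' hy'
    have h2' : y' ∈ geoSeg x (f y) := by rw [hfe]; exact hf2 y' hy'
    have ha : y' ∈ geoSeg y (f y) := mem_geoSeg_of_dist_le' P.tree h1 h1' (le_of_lt hlt)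
    have hdx : dist x y' ≤ dist x y := by
      have e1 := hy.1; have e2 := hy'.1
      rw [mem_geoSeg_iff] at e1 e2
      have c1 : dist y x = dist x y := dist_comm y x
      have c2 : dist y' x = dist x y' := dist_comm y' x
      linarith
    have hb : y ∈ geoSeg y' (f y) := mem_geoSeg_of_dist_le' P.tree h2' h2 hdx
    rw [mem_geoSeg_iff] at ha hb
    have c3 : dist y y' = dist y' y := dist_comm y y'
    have hyy : dist y y' = 0 := by linarith
    rw [dist_eq_zero.mp hyy] at hlt
    exact lt_irrefl _ hlt
  have hinj : InjOn f E := by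
    intro y hy y' hy' hfe
    rcases lt_trichotomy (dist ρ y) (dist ρ y') with h | h | h
    · exact absurd (key y hy y' hy' hfe h) (fun h => h)
    · exact eq_of_mem_geoSeg_of_dist_eq P.tree hy.1 hy'.1 h
    · exact absurd (key y' hy' y hy hfe.symm h) (fun h => h)
  exact MapsTo.countable_of_injOn (fun y hy => hfQ y hy) hinj hQc

end PlaneRTree

/-- For every `α ∈ T × [0,1]`, `p_↶(α) + p_→(α) + p_↷(α) = 1`. -/
theorem pleft_add_pfront_add_pright_eq_one {T : Type*} [MetricSpace T]
    [MeasurableSpace T] [BorelSpace T] (P : PlaneRTree T)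
    (p : Measure T) [IsProbabilityMeasure p]
    (α : T × ℝ) (hα : α.2 ∈ Icc (0:ℝ) 1) :
    P.pleft p α + P.pfront p α + P.pright p α = 1 := by
  classical
  open RTreeAux in
  obtain ⟨x, v⟩ := α
  simp only at hα
  haveI := P.sep
  set ρ := P.root with hρdef
  set spine := geoSeg ρ x with hspinedef
  set ν := volume.restrict (Icc (0:ℝ) 1) with hνdef
  haveI hνprob : IsProbabilityMeasure ν := by
    constructor
    rw [hνdef, Measure.restrict_apply_univ, Real.volume_Icc]
    norm_num
  set aα : T → ℝ := fun z => P.ang z (x, v) with haα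
  have hangx : ∀ z : T, aα z = if z = x then v else P.u z x := fun z => rfl
  have hang1 : ∀ (z : T) (w : ℝ), P.ang z (z, w) = w := fun z w => by
    rw [PlaneRTree.ang, if_pos rfl]
  have hang2 : ∀ (z y : T) (w : ℝ), z ≠ y → P.ang z (y, w) = P.u z y := fun z y w h => by
    rw [PlaneRTree.ang, if_neg h]
  have haα' : ∀ z : T, P.ang z (x, v) = aα z := fun z => rfl
  set AL := {y | y ∉ spine ∧ P.u (P.cca x y) y < aα (P.cca x y)} with hAL
  set AR := {y | y ∉ spine ∧ aα (P.cca x y) < P.u (P.cca x y) y} with hAR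
  set AF := {y | y ∉ spine ∧ P.cca x y = x ∧ P.u x y = v} with hAF
  have hxspine : x ∈ spine := RTreeAux.right_mem_geoSeg ρ x
  have hspine_iff : ∀ y, y ∈ spine ↔ P.cca x y = y := by
    intro y
    constructor
    · exact fun h => P.cca_eq_right h
    · intro h; rw [← h]; exact (P.cca_spec (x := x) (y := y)).1
  -- trichotomy off the spine
  have htri : ∀ y, y ∉ spine → (y ∈ AL ∨ y ∈ AF ∨ y ∈ AR) := by
    intro y hy
    rcases lt_trichotomy (P.u (P.cca x y) y) (aα (P.cca x y)) with h | h | h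
    · exact Or.inl ⟨hy, h⟩
    · refine Or.inr (Or.inl ⟨hy, ?_⟩)
      by_cases hmx : P.cca x y = x
      · refine ⟨hmx, ?_⟩
        rw [hmx, hangx, if_pos rfl] at h
        exact h
      · exfalso
        rw [hangx, if_neg hmx] at h
        have hym : y ≠ P.cca x y := fun he => hy ((hspine_iff y).mpr he.symm)
        have hxm : x ≠ P.cca x y := fun he => hmx he.symm
        rw [P.u_eq_u_iff hym hxm] at h
        exact h (by rw [geoSeg_comm]; exact (P.cca_spec (x := x) (y := y)).2.2)
    · exact Or.inr (Or.inr ⟨hy, h⟩)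
  -- mutual exclusivity off the spine
  have hLF : ∀ y, y ∈ AL → y ∈ AF → False := by
    rintro y ⟨_, hlt⟩ ⟨_, hcx, huv⟩
    rw [hcx, hangx, if_pos rfl, huv] at hlt
    exact lt_irrefl _ hlt
  have hRF : ∀ y, y ∈ AR → y ∈ AF → False := by
    rintro y ⟨_, hlt⟩ ⟨_, hcx, huv⟩
    rw [hcx, hangx, if_pos rfl, huv] at hlt
    exact lt_irrefl _ hlt
  have hLR : ∀ y, y ∈ AL → y ∈ AR → False := by
    rintro y ⟨_, h1⟩ ⟨_, h2⟩
    exact lt_irrefl _ (h1.trans h2)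
  -- pointwise descriptions
  have hLiff : ∀ y w, P.leftOf (y, w) (x, v) ↔
      (y ∈ AL ∨ (y ∈ spine ∧ y ≠ x ∧ w < P.u y x) ∨ (y = x ∧ w < v)) := by
    intro y w
    have hcc : P.cca y x = P.cca x y := P.cca_comm
    rw [PlaneRTree.leftOf]
    simp only [hcc]
    by_cases hyx : y = x
    · subst hyx
      have hcy : P.cca y y = y := (hspine_iff y).mp hxspine
      rw [hcy, hang1, hang1]
      constructor
      · intro h; exact Or.inr (Or.inr ⟨rfl, h⟩)
      · rintro (⟨hns, _⟩ | ⟨_, hne, _⟩ | ⟨_, h⟩)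
        · exact absurd hxspine hns
        · exact absurd rfl hne
        · exact h
    · by_cases hys : y ∈ spine
      · have hcy : P.cca x y = y := (hspine_iff y).mp hys
        rw [hcy]
        simp only [PlaneRTree.ang, if_pos rfl, if_neg hyx]
        constructor
        · intro h; exact Or.inr (Or.inl ⟨hys, hyx, h⟩)
        · rintro (⟨hns, _⟩ | ⟨_, _, h⟩ | ⟨he, _⟩)
          · exact absurd hys hns
          · exact h
          · exact absurd he hyx
      · have hmy : ¬ (P.cca x y = y) := fun h => hys ((hspine_iff y).mpr h)
        simp only [PlaneRTree.ang, if_neg hmy]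
        have : (if P.cca x y = x then v else P.u (P.cca x y) x) = aα (P.cca x y) := by
          rw [hangx]
        rw [this]
        constructor
        · intro h; exact Or.inl ⟨hys, h⟩
        · rintro (⟨_, h⟩ | ⟨hs, _, _⟩ | ⟨he, _⟩)
          · exact h
          · exact absurd hs hys
          · exact absurd he hyx
  have hRiff : ∀ y w, P.leftOf (x, v) (y, w) ↔
      (y ∈ AR ∨ (y ∈ spine ∧ y ≠ x ∧ P.u y x < w) ∨ (y = x ∧ v < w)) := by
    intro y w
    rw [PlaneRTree.leftOf]
    by_cases hyx : y = x
    · subst hyx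
      have hcy : P.cca y y = y := (hspine_iff y).mp hxspine
      rw [hcy, hang1, hang1]
      constructor
      · intro h; exact Or.inr (Or.inr ⟨rfl, h⟩)
      · rintro (⟨hns, _⟩ | ⟨_, hne, _⟩ | ⟨_, h⟩)
        · exact absurd hxspine hns
        · exact absurd rfl hne
        · exact h
    · by_cases hys : y ∈ spine
      · have hcy : P.cca x y = y := (hspine_iff y).mp hys
        rw [hcy]
        simp only [PlaneRTree.ang, if_pos rfl, if_neg hyx]
        constructor
        · intro h; exact Or.inr (Or.inl ⟨hys, hyx, h⟩)
        · rintro (⟨hns, _⟩ | ⟨_, _, h⟩ | ⟨he, _⟩)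
          · exact absurd hys hns
          · exact h
          · exact absurd he hyx
      · have hmy : ¬ (P.cca x y = y) := fun h => hys ((hspine_iff y).mpr h)
        simp only [PlaneRTree.ang, if_neg hmy]
        have : (if P.cca x y = x then v else P.u (P.cca x y) x) = aα (P.cca x y) := by
          rw [hangx]
        rw [this]
        constructor
        · intro h; exact Or.inl ⟨hys, h⟩
        · rintro (⟨_, h⟩ | ⟨hs, _, _⟩ | ⟨he, _⟩)
          · exact h
          · exact absurd hs hys
          · exact absurd he hyx
  have hFiff : ∀ y w, P.frontOf (x, v) (y, w) ↔ (y ∈ AF ∨ (y = x ∧ w = v)) := by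
    intro y w
    rw [PlaneRTree.frontOf]
    by_cases hyx : y = x
    · subst hyx
      rw [hang1]
      constructor
      · rintro ⟨_, h⟩; exact Or.inr ⟨rfl, h⟩
      · rintro (⟨hns, _⟩ | ⟨_, h⟩)
        · exact absurd hxspine hns
        · exact ⟨hxspine, h⟩
    · have hxy : x ≠ y := fun h => hyx h.symm
      simp only [PlaneRTree.ang, if_neg hxy]
      constructor
      · rintro ⟨hmem, h⟩
        have hcx : P.cca x y = x := P.cca_eq_left hmem
        have hns : y ∉ spine := by
          intro hs
          exact hyx (((hspine_iff y).mp hs).symm.trans hcx)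
        exact Or.inl ⟨hns, hcx, h⟩
      · rintro (⟨_, hcx, h⟩ | ⟨he, _⟩)
        · refine ⟨?_, h⟩
          rw [← hcx]
          exact (P.cca_spec (x := x) (y := y)).2.1
        · exact absurd he hyx
  -- transport along components
  have htrans : ∀ y z : T, y ∉ spine → z ∉ spine → P.cca x y ∉ geoSeg y z →
      P.cca x z = P.cca x y ∧ P.u (P.cca x y) z = P.u (P.cca x y) y := by
    intro y z hy hz hns
    have hcz : P.cca x z = P.cca x y := P.cca_transport hns
    refine ⟨hcz, ?_⟩
    have hzm : z ≠ P.cca x y := fun h => hz (h ▸ (P.cca_spec (x := x) (y := y)).1)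
    have hym : y ≠ P.cca x y := fun h => hy (h ▸ (P.cca_spec (x := x) (y := y)).1)
    rw [P.u_eq_u_iff hzm hym]
    intro hmem
    exact hns (by rwa [geoSeg_comm] at hmem)
  have hopen_ng : ∀ (c y : T), IsOpen {z | c ∉ geoSeg y z} := by
    intro c y
    have : {z | c ∉ geoSeg y z} = {z | dist y c + dist c z = dist y z}ᶜ := rfl
    rw [this]
    exact (isClosed_eq (continuous_const.add (continuous_const.dist continuous_id))
      (continuous_const.dist continuous_id)).isOpen_compl
  have hspine_closed : IsClosed spine := RTreeAux.isClosed_geoSeg ρ x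
  have hself : ∀ y : T, y ∉ spine → P.cca x y ∉ geoSeg y y := by
    intro y hy h
    rw [RTreeAux.geoSeg_self, mem_singleton_iff] at h
    exact hy ((hspine_iff y).mpr h)
  have hALopen : IsOpen AL := by
    rw [isOpen_iff_forall_mem_open]
    rintro y ⟨hy, hlt⟩
    refine ⟨{z | P.cca x y ∉ geoSeg y z} ∩ spineᶜ, ?_, (hopen_ng _ _).inter hspine_closed.isOpen_compl,
      ⟨hself y hy, hy⟩⟩
    rintro z ⟨hz1, hz2⟩
    obtain ⟨he, hu⟩ := htrans y z hy hz2 hz1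
    exact ⟨hz2, by rw [he, hu]; exact hlt⟩
  have hARopen : IsOpen AR := by
    rw [isOpen_iff_forall_mem_open]
    rintro y ⟨hy, hlt⟩
    refine ⟨{z | P.cca x y ∉ geoSeg y z} ∩ spineᶜ, ?_, (hopen_ng _ _).inter hspine_closed.isOpen_compl,
      ⟨hself y hy, hy⟩⟩
    rintro z ⟨hz1, hz2⟩
    obtain ⟨he, hu⟩ := htrans y z hy hz2 hz1
    exact ⟨hz2, by rw [he, hu]; exact hlt⟩
  have hAFopen : IsOpen AF := by
    rw [isOpen_iff_forall_mem_open]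
    rintro y ⟨hy, hcx, huv⟩
    refine ⟨{z | P.cca x y ∉ geoSeg y z} ∩ spineᶜ, ?_, (hopen_ng _ _).inter hspine_closed.isOpen_compl,
      ⟨hself y hy, hy⟩⟩
    rintro z ⟨hz1, hz2⟩
    obtain ⟨he, hu⟩ := htrans y z hy hz2 hz1
    refine ⟨hz2, he.trans hcx, ?_⟩
    rw [hcx] at hu
    rw [hu, huv]
  -- the countable exceptional set
  set E : Set T := {y | y ∈ geoSeg P.root x ∧ y ≠ x ∧ y ≠ P.root ∧ P.u y x ≠ 1/2} ∪ {P.root}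
    with hEdef
  have hEc : E.Countable := (P.countable_bad x).union (countable_singleton _)
  have hhalf : ∀ y, y ∈ spine → y ≠ x → y ∉ E → P.u y x = 1/2 := by
    intro y hy hyx hyE
    by_contra h
    by_cases hyρ : y = ρ
    · exact hyE (Or.inr (by rw [hyρ]; exact rfl))
    · exact hyE (Or.inl ⟨hy, hyx, hyρ, h⟩)
  -- the three sets
  set SL := {β : T × ℝ | P.leftOf β (x, v)} with hSLdef
  set SF := {β : T × ℝ | P.frontOf (x, v) β} with hSFdef
  set SR := {β : T × ℝ | P.leftOf (x, v) β} with hSRdef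
  have hSLeq : SL = (AL ×ˢ (univ : Set ℝ)) ∪ (((spine \ {x}) \ E) ×ˢ Iio (1/2 : ℝ))
      ∪ (⋃ e ∈ (spine \ {x}) ∩ E, ({e} ×ˢ Iio (P.u e x))) ∪ ({x} ×ˢ Iio v) := by
    ext ⟨y, w⟩
    simp only [hSLdef, mem_setOf_eq, mem_union, mem_prod, mem_iUnion, mem_singleton_iff,
      mem_Iio, mem_univ, and_true, mem_diff, mem_inter_iff, exists_prop]
    rw [hLiff y w]
    constructor
    · rintro (h | ⟨hs, hx, hw⟩ | ⟨rfl, hw⟩)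
      · exact Or.inl (Or.inl (Or.inl h))
      · by_cases hyE : y ∈ E
        · exact Or.inl (Or.inr ⟨y, ⟨⟨hs, hx⟩, hyE⟩, rfl, hw⟩)
        · exact Or.inl (Or.inl (Or.inr ⟨⟨⟨hs, hx⟩, hyE⟩,
            by rwa [hhalf y hs hx hyE] at hw⟩))
      · exact Or.inr ⟨rfl, hw⟩
    · rintro (((h | ⟨⟨⟨hs, hx⟩, hyE⟩, hw⟩) | ⟨e, ⟨⟨hs, hx⟩, hyE⟩, rfl, hw⟩) | ⟨rfl, hw⟩)
      · exact Or.inl h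
      · exact Or.inr (Or.inl ⟨hs, hx, by rwa [hhalf y hs hx hyE]⟩)
      · exact Or.inr (Or.inl ⟨hs, hx, hw⟩)
      · exact Or.inr (Or.inr ⟨rfl, hw⟩)
  have hSReq : SR = (AR ×ˢ (univ : Set ℝ)) ∪ (((spine \ {x}) \ E) ×ˢ Ioi (1/2 : ℝ))
      ∪ (⋃ e ∈ (spine \ {x}) ∩ E, ({e} ×ˢ Ioi (P.u e x))) ∪ ({x} ×ˢ Ioi v) := by
    ext ⟨y, w⟩
    simp only [hSRdef, mem_setOf_eq, mem_union, mem_prod, mem_iUnion, mem_singleton_iff,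
      mem_Ioi, mem_univ, and_true, mem_diff, mem_inter_iff, exists_prop]
    rw [hRiff y w]
    constructor
    · rintro (h | ⟨hs, hx, hw⟩ | ⟨rfl, hw⟩)
      · exact Or.inl (Or.inl (Or.inl h))
      · by_cases hyE : y ∈ E
        · exact Or.inl (Or.inr ⟨y, ⟨⟨hs, hx⟩, hyE⟩, rfl, hw⟩)
        · exact Or.inl (Or.inl (Or.inr ⟨⟨⟨hs, hx⟩, hyE⟩,
            by rwa [hhalf y hs hx hyE] at hw⟩))
      · exact Or.inr ⟨rfl, hw⟩
    · rintro (((h | ⟨⟨⟨hs, hx⟩, hyE⟩, hw⟩) | ⟨e, ⟨⟨hs, hx⟩, hyE⟩, rfl, hw⟩) | ⟨rfl, hw⟩)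
      · exact Or.inl h
      · exact Or.inr (Or.inl ⟨hs, hx, by rwa [hhalf y hs hx hyE]⟩)
      · exact Or.inr (Or.inl ⟨hs, hx, hw⟩)
      · exact Or.inr (Or.inr ⟨rfl, hw⟩)
  have hSFeq : SF = (AF ×ˢ (univ : Set ℝ)) ∪ ({x} ×ˢ ({v} : Set ℝ)) := by
    ext ⟨y, w⟩
    simp only [hSFdef, mem_setOf_eq, mem_union, mem_prod, mem_singleton_iff, mem_univ, and_true]
    rw [hFiff y w]
  -- measurability
  have hEm : MeasurableSet E := hEc.measurableSet
  have hSLme : MeasurableSet SL := by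
    rw [hSLeq]
    refine MeasurableSet.union (MeasurableSet.union (MeasurableSet.union ?_ ?_) ?_) ?_
    · exact hALopen.measurableSet.prod MeasurableSet.univ
    · exact ((hspine_closed.measurableSet.diff (measurableSet_singleton x)).diff hEm).prod
        measurableSet_Iio
    · exact MeasurableSet.biUnion (hEc.mono inter_subset_right)
        (fun e _ => (measurableSet_singleton e).prod measurableSet_Iio)
    · exact (measurableSet_singleton x).prod measurableSet_Iio
  have hSRme : MeasurableSet SR := by
    rw [hSReq]
    refine MeasurableSet.union (MeasurableSet.union (MeasurableSet.union ?_ ?_) ?_) ?_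
    · exact hARopen.measurableSet.prod MeasurableSet.univ
    · exact ((hspine_closed.measurableSet.diff (measurableSet_singleton x)).diff hEm).prod
        measurableSet_Ioi
    · exact MeasurableSet.biUnion (hEc.mono inter_subset_right)
        (fun e _ => (measurableSet_singleton e).prod measurableSet_Ioi)
    · exact (measurableSet_singleton x).prod measurableSet_Ioi
  have hSFme : MeasurableSet SF := by
    rw [hSFeq]
    exact (hAFopen.measurableSet.prod MeasurableSet.univ).union
      ((measurableSet_singleton x).prod (measurableSet_singleton v))
  -- measure of sections
  have hνIio : ∀ c : ℝ, 0 ≤ c → c ≤ 1 → ν (Iio c) = ENNReal.ofReal c := by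
    intro c h0 h1
    rw [hνdef, Measure.restrict_apply measurableSet_Iio]
    have : Iio c ∩ Icc 0 1 = Ico 0 c := by
      ext w
      simp only [mem_inter_iff, mem_Iio, mem_Icc, mem_Ico]
      constructor
      · rintro ⟨hw, h2, _⟩; exact ⟨h2, hw⟩
      · rintro ⟨h2, hw⟩; exact ⟨hw, h2, by linarith⟩
    rw [this, Real.volume_Ico, sub_zero]
  have hνIoi : ∀ c : ℝ, 0 ≤ c → c ≤ 1 → ν (Ioi c) = ENNReal.ofReal (1 - c) := by
    intro c h0 h1
    rw [hνdef, Measure.restrict_apply measurableSet_Ioi]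
    have : Ioi c ∩ Icc 0 1 = Ioc c 1 := by
      ext w
      simp only [mem_inter_iff, mem_Ioi, mem_Icc, mem_Ioc]
      constructor
      · rintro ⟨hw, _, h3⟩; exact ⟨hw, h3⟩
      · rintro ⟨hw, h3⟩; exact ⟨hw, by linarith, h3⟩
    rw [this, Real.volume_Ioc]
  have hνsing : ∀ c : ℝ, ν ({c} : Set ℝ) = 0 := by
    intro c
    rw [hνdef, Measure.restrict_apply (measurableSet_singleton c)]
    exact measure_mono_null inter_subset_left (Real.volume_singleton)
  have hofsum : ∀ c : ℝ, 0 ≤ c → c ≤ 1 →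
      ENNReal.ofReal c + ENNReal.ofReal (1 - c) = 1 := by
    intro c h0 h1
    rw [← ENNReal.ofReal_add h0 (by linarith)]
    norm_num
  -- per-fiber computation
  have hsec : ∀ y, ν (Prod.mk y ⁻¹' SL) + ν (Prod.mk y ⁻¹' SF) + ν (Prod.mk y ⁻¹' SR) = 1 := by
    intro y
    by_cases hyx : y = x
    · subst hyx
      have hnAL : y ∉ AL := fun h => h.1 hxspine
      have hnAR : y ∉ AR := fun h => h.1 hxspine
      have hnAF : y ∉ AF := fun h => h.1 hxspine
      have e1 : Prod.mk y ⁻¹' SL = Iio v := by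
        ext w
        show P.leftOf (y, w) (y, v) ↔ w ∈ Iio v
        rw [hLiff y w]
        constructor
        · rintro (h | ⟨_, hne, _⟩ | ⟨_, hw⟩)
          · exact absurd h hnAL
          · exact absurd rfl hne
          · exact hw
        · intro hw; exact Or.inr (Or.inr ⟨rfl, hw⟩)
      have e2 : Prod.mk y ⁻¹' SF = {v} := by
        ext w
        show P.frontOf (y, v) (y, w) ↔ w ∈ ({v} : Set ℝ)
        rw [hFiff y w]
        constructor
        · rintro (h | ⟨_, hw⟩)
          · exact absurd h hnAF
          · exact hw
        · intro hw; exact Or.inr ⟨rfl, hw⟩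
      have e3 : Prod.mk y ⁻¹' SR = Ioi v := by
        ext w
        show P.leftOf (y, v) (y, w) ↔ w ∈ Ioi v
        rw [hRiff y w]
        constructor
        · rintro (h | ⟨_, hne, _⟩ | ⟨_, hw⟩)
          · exact absurd h hnAR
          · exact absurd rfl hne
          · exact hw
        · intro hw; exact Or.inr (Or.inr ⟨rfl, hw⟩)
      rw [e1, e2, e3, hνIio v hα.1 hα.2, hνsing, hνIoi v hα.1 hα.2, add_zero,
        hofsum v hα.1 hα.2]
    · by_cases hys : y ∈ spine
      · have hnAL : y ∉ AL := fun h => h.1 hys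
        have hnAR : y ∉ AR := fun h => h.1 hys
        have hnAF : y ∉ AF := fun h => h.1 hys
        have hu01 := P.u_mem y x
        have e1 : Prod.mk y ⁻¹' SL = Iio (P.u y x) := by
          ext w
          show P.leftOf (y, w) (x, v) ↔ w ∈ Iio (P.u y x)
          rw [hLiff y w]
          constructor
          · rintro (h | ⟨_, _, hw⟩ | ⟨he, _⟩)
            · exact absurd h hnAL
            · exact hw
            · exact absurd he hyx
          · intro hw; exact Or.inr (Or.inl ⟨hys, hyx, hw⟩)
        have e2 : Prod.mk y ⁻¹' SF = ∅ := by
          ext w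
          show P.frontOf (x, v) (y, w) ↔ w ∈ (∅ : Set ℝ)
          rw [hFiff y w]
          simp only [mem_empty_iff_false, iff_false]
          rintro (h | ⟨he, _⟩)
          · exact hnAF h
          · exact hyx he
        have e3 : Prod.mk y ⁻¹' SR = Ioi (P.u y x) := by
          ext w
          show P.leftOf (x, v) (y, w) ↔ w ∈ Ioi (P.u y x)
          rw [hRiff y w]
          constructor
          · rintro (h | ⟨_, _, hw⟩ | ⟨he, _⟩)
            · exact absurd h hnAR
            · exact hw
            · exact absurd he hyx
          · intro hw; exact Or.inr (Or.inl ⟨hys, hyx, hw⟩)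
        rw [e1, e2, e3, hνIio _ hu01.1 hu01.2, hνIoi _ hu01.1 hu01.2, measure_empty,
          add_zero, hofsum _ hu01.1 hu01.2]
      · -- off the spine
        rcases htri y hys with h | h | h
        · have e1 : Prod.mk y ⁻¹' SL = univ := by
            ext w
            show P.leftOf (y, w) (x, v) ↔ w ∈ (univ : Set ℝ)
            rw [hLiff y w]
            simp only [mem_univ, iff_true]
            exact Or.inl h
          have e2 : Prod.mk y ⁻¹' SF = ∅ := by
            ext w
            show P.frontOf (x, v) (y, w) ↔ w ∈ (∅ : Set ℝ)
            rw [hFiff y w]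
            simp only [mem_empty_iff_false, iff_false]
            rintro (hf | ⟨he, _⟩)
            · exact hLF y h hf
            · exact hyx he
          have e3 : Prod.mk y ⁻¹' SR = ∅ := by
            ext w
            show P.leftOf (x, v) (y, w) ↔ w ∈ (∅ : Set ℝ)
            rw [hRiff y w]
            simp only [mem_empty_iff_false, iff_false]
            rintro (hr | ⟨hs, _, _⟩ | ⟨he, _⟩)
            · exact hLR y h hr
            · exact hys hs
            · exact hyx he
          rw [e1, e2, e3, measure_univ, measure_empty, add_zero, add_zero]
        · have e1 : Prod.mk y ⁻¹' SL = ∅ := by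
            ext w
            show P.leftOf (y, w) (x, v) ↔ w ∈ (∅ : Set ℝ)
            rw [hLiff y w]
            simp only [mem_empty_iff_false, iff_false]
            rintro (hl | ⟨hs, _, _⟩ | ⟨he, _⟩)
            · exact hLF y hl h
            · exact hys hs
            · exact hyx he
          have e2 : Prod.mk y ⁻¹' SF = univ := by
            ext w
            show P.frontOf (x, v) (y, w) ↔ w ∈ (univ : Set ℝ)
            rw [hFiff y w]
            simp only [mem_univ, iff_true]
            exact Or.inl h
          have e3 : Prod.mk y ⁻¹' SR = ∅ := by
            ext w
            show P.leftOf (x, v) (y, w) ↔ w ∈ (∅ : Set ℝ)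
            rw [hRiff y w]
            simp only [mem_empty_iff_false, iff_false]
            rintro (hr | ⟨hs, _, _⟩ | ⟨he, _⟩)
            · exact hRF y hr h
            · exact hys hs
            · exact hyx he
          rw [e1, e2, e3, measure_univ, measure_empty, add_zero, zero_add]
        · have e1 : Prod.mk y ⁻¹' SL = ∅ := by
            ext w
            show P.leftOf (y, w) (x, v) ↔ w ∈ (∅ : Set ℝ)
            rw [hLiff y w]
            simp only [mem_empty_iff_false, iff_false]
            rintro (hl | ⟨hs, _, _⟩ | ⟨he, _⟩)
            · exact hLR y hl h
            · exact hys hs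
            · exact hyx he
          have e2 : Prod.mk y ⁻¹' SF = ∅ := by
            ext w
            show P.frontOf (x, v) (y, w) ↔ w ∈ (∅ : Set ℝ)
            rw [hFiff y w]
            simp only [mem_empty_iff_false, iff_false]
            rintro (hf | ⟨he, _⟩)
            · exact hRF y h hf
            · exact hyx he
          have e3 : Prod.mk y ⁻¹' SR = univ := by
            ext w
            show P.leftOf (x, v) (y, w) ↔ w ∈ (univ : Set ℝ)
            rw [hRiff y w]
            simp only [mem_univ, iff_true]
            exact Or.inl h
          rw [e1, e2, e3, measure_univ, measure_empty, add_zero, zero_add]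
  -- putting it together
  have hplprob : IsProbabilityMeasure (PlaneRTree.pL (T := T) p) := by
    rw [PlaneRTree.pL]
    infer_instance
  have hmL : Measurable fun y => ν (Prod.mk y ⁻¹' SL) := measurable_measure_prodMk_left hSLme
  have hmF : Measurable fun y => ν (Prod.mk y ⁻¹' SF) := measurable_measure_prodMk_left hSFme
  have key : PlaneRTree.pL (T := T) p SL + PlaneRTree.pL (T := T) p SF
      + PlaneRTree.pL (T := T) p SR = 1 := by
    rw [PlaneRTree.pL, ← hνdef]
    rw [Measure.prod_apply hSLme, Measure.prod_apply hSFme, Measure.prod_apply hSRme]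
    rw [← lintegral_add_left hmL, ← lintegral_add_left (f := fun y => ν (Prod.mk y ⁻¹' SL) + ν (Prod.mk y ⁻¹' SF)) (hmL.add hmF)]
    rw [lintegral_congr hsec, lintegral_one, measure_univ]
  have hne1 : PlaneRTree.pL (T := T) p SL ≠ ⊤ := measure_ne_top _ _
  have hne2 : PlaneRTree.pL (T := T) p SF ≠ ⊤ := measure_ne_top _ _
  have hne3 : PlaneRTree.pL (T := T) p SR ≠ ⊤ := measure_ne_top _ _
  show (PlaneRTree.pL (T := T) p {β : T × ℝ | P.leftOf β (x, v)}).toReal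
    + (PlaneRTree.pL (T := T) p {β : T × ℝ | P.frontOf (x, v) β}).toReal
    + (PlaneRTree.pL (T := T) p {β : T × ℝ | P.leftOf (x, v) β}).toReal = 1
  rw [← hSLdef, ← hSFdef, ← hSRdef]
  rw [← ENNReal.toReal_add hne1 hne2, ← ENNReal.toReal_add (ENNReal.add_ne_top.mpr ⟨hne1, hne2⟩) hne3,
    key, ENNReal.toReal_one]
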